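/- arXiv:0809.0466 — 4 statements merged into one kernel-verified Lean document; each statement's English description precedes it below -/
import Mathlib

section
/- For unit complex numbers α, β, the representations V_α and V_β of G = ℤ ⋊ ℤ/2 are isomorphic (there exists a ℂ-linear isomorphism of ℂ² intertwining the two G-actions) if and only if α = β or α = β⁻¹. -/
/-- The inversion automorphism of `Multiplicative ℤ`, i.e. negation on `ℤ`. -/
def negAut : MulAut (Multiplicative ℤ) := MulEquiv.inv (Multiplicative ℤ)

lemma negAut_sq : negAut ^ 2 = 1 := by
  ext x
  show negAut (negAut x) = x
  exact inv_inv x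

/-- The action of `ℤ/2` on `ℤ` in which the nontrivial element acts by negation. -/
def dihedralAction : Multiplicative (ZMod 2) →* MulAut (Multiplicative ℤ) where
  toFun ε := negAut ^ (ε.toAdd.val)
  map_one' := by
    show negAut ^ (0 : ZMod 2).val = 1
    simp
  map_mul' x y := by
    show negAut ^ (x.toAdd + y.toAdd).val = _
    rw [ZMod.val_add, ← pow_eq_pow_mod _ negAut_sq, pow_add]

/-- The infinite dihedral group `ℤ ⋊ ℤ/2`, with the nontrivial element of `ℤ/2`
acting on `ℤ` by negation. -/
def DihedralZ : Type := SemidirectProduct (Multiplicative ℤ) (Multiplicative (ZMod 2)) dihedralAction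


instance : Group DihedralZ := inferInstanceAs (Group (SemidirectProduct _ _ _))

/-- The generator `t = (1, 0)` of `ℤ ⋊ ℤ/2`. -/
def tGen : DihedralZ := ⟨Multiplicative.ofAdd (1 : ℤ), 1⟩

/-- The generator `s = (0, 1)` of `ℤ ⋊ ℤ/2`. -/
def sGen : DihedralZ := ⟨1, Multiplicative.ofAdd (1 : ZMod 2)⟩

lemma DihedralZ.mem_of_gens (H : Subgroup DihedralZ) (ht : tGen ∈ H) (hs : sGen ∈ H)
    (g : DihedralZ) : g ∈ H := by
  have key : ∀ m : ℤ, (SemidirectProduct.inl (Multiplicative.ofAdd m) :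
      SemidirectProduct (Multiplicative ℤ) (Multiplicative (ZMod 2)) dihedralAction)
      = tGen ^ m := by
    intro m
    have h : Multiplicative.ofAdd m = Multiplicative.ofAdd (1 : ℤ) ^ m := by
      rw [← ofAdd_zsmul]; norm_num
    rw [h, map_zpow]
    rfl
  revert g
  show ∀ g : SemidirectProduct (Multiplicative ℤ) (Multiplicative (ZMod 2)) dihedralAction,
    g ∈ H
  intro g
  obtain ⟨n, ε⟩ := g
  have hg : (⟨n, ε⟩ : SemidirectProduct (Multiplicative ℤ) (Multiplicative (ZMod 2)) dihedralAction)
      = SemidirectProduct.inl n * SemidirectProduct.inr ε :=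
    (SemidirectProduct.inl_left_mul_inr_right _).symm
  rw [hg]
  refine H.mul_mem ?_ ?_
  · have hn : n = Multiplicative.ofAdd (Multiplicative.toAdd n) := rfl
    rw [hn, key]
    exact H.zpow_mem ht _
  · rcases (show ∀ x : Multiplicative (ZMod 2), x = 1 ∨ x = Multiplicative.ofAdd 1 from by
        decide) ε with h | h
    · rw [h, map_one]; exact H.one_mem
    · rw [h]; exact hs

lemma intertwine_of_gens (ρα ρβ : DihedralZ →* Matrix.unitaryGroup (Fin 2) ℂ)
    (e : (Fin 2 → ℂ) ≃ₗ[ℂ] (Fin 2 → ℂ))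
    (ht : ∀ v, e ((ρα tGen : Matrix (Fin 2) (Fin 2) ℂ).mulVec v)
        = (ρβ tGen : Matrix (Fin 2) (Fin 2) ℂ).mulVec (e v))
    (hs : ∀ v, e ((ρα sGen : Matrix (Fin 2) (Fin 2) ℂ).mulVec v)
        = (ρβ sGen : Matrix (Fin 2) (Fin 2) ℂ).mulVec (e v)) :
    ∀ (g : DihedralZ) (v : Fin 2 → ℂ),
      e ((ρα g : Matrix (Fin 2) (Fin 2) ℂ).mulVec v)
        = (ρβ g : Matrix (Fin 2) (Fin 2) ℂ).mulVec (e v) := by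
  let H : Subgroup DihedralZ :=
    { carrier := {g | ∀ v, e ((ρα g : Matrix (Fin 2) (Fin 2) ℂ).mulVec v)
        = (ρβ g : Matrix (Fin 2) (Fin 2) ℂ).mulVec (e v)}
      one_mem' := by
        intro v
        simp [Matrix.one_mulVec]
      mul_mem' := by
        intro a b ha hb v
        have hcoeα : (ρα (a * b) : Matrix (Fin 2) (Fin 2) ℂ) = (ρα a : Matrix (Fin 2) (Fin 2) ℂ) * ρα b := by
          rw [map_mul]; rfl
        have hcoeβ : (ρβ (a * b) : Matrix (Fin 2) (Fin 2) ℂ) = (ρβ a : Matrix (Fin 2) (Fin 2) ℂ) * ρβ b := by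
          rw [map_mul]; rfl
        rw [hcoeα, hcoeβ, ← Matrix.mulVec_mulVec, ← Matrix.mulVec_mulVec, ha, hb]
      inv_mem' := by
        intro a ha v
        have key : ∀ (ρ : DihedralZ →* Matrix.unitaryGroup (Fin 2) ℂ) (w : Fin 2 → ℂ),
            (ρ a : Matrix (Fin 2) (Fin 2) ℂ).mulVec ((ρ a⁻¹ : Matrix (Fin 2) (Fin 2) ℂ).mulVec w) = w ∧
            (ρ a⁻¹ : Matrix (Fin 2) (Fin 2) ℂ).mulVec ((ρ a : Matrix (Fin 2) (Fin 2) ℂ).mulVec w) = w := by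
          intro ρ w
          constructor
          · rw [Matrix.mulVec_mulVec]
            have : (ρ a : Matrix (Fin 2) (Fin 2) ℂ) * ρ a⁻¹ = 1 := by
              rw [← Submonoid.coe_mul, ← map_mul, mul_inv_cancel, map_one, OneMemClass.coe_one]
            rw [this, Matrix.one_mulVec]
          · rw [Matrix.mulVec_mulVec]
            have : (ρ a⁻¹ : Matrix (Fin 2) (Fin 2) ℂ) * ρ a = 1 := by
              rw [← Submonoid.coe_mul, ← map_mul, inv_mul_cancel, map_one, OneMemClass.coe_one]
            rw [this, Matrix.one_mulVec]
        have h1 := ha ((ρα a⁻¹ : Matrix (Fin 2) (Fin 2) ℂ).mulVec v)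
        rw [(key ρα v).1] at h1
        rw [h1, Matrix.mulVec_mulVec]
        have : (ρβ a⁻¹ : Matrix (Fin 2) (Fin 2) ℂ) * ρβ a = 1 := by
          rw [← Submonoid.coe_mul, ← map_mul, inv_mul_cancel, map_one, OneMemClass.coe_one]
        rw [this, Matrix.one_mulVec] }
  intro g
  exact DihedralZ.mem_of_gens H ht hs g

/-- For unit complex numbers `α, β`, the representations `V_α` and `V_β` of
`G = ℤ ⋊ ℤ/2` (where `V_α` sends `t` to `diag(α, α⁻¹)` and `s` to `[[0,1],[1,0]]`)
are isomorphic if and only if `α = β` or `α = β⁻¹`. -/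
theorem Valpha_iso_iff (α β : ℂ) (hα : ‖α‖ = 1) (hβ : ‖β‖ = 1)
    (ρα ρβ : DihedralZ →* Matrix.unitaryGroup (Fin 2) ℂ)
    (hαt : (ρα tGen : Matrix (Fin 2) (Fin 2) ℂ) = !![α, 0; 0, α⁻¹])
    (hαs : (ρα sGen : Matrix (Fin 2) (Fin 2) ℂ) = !![0, 1; 1, 0])
    (hβt : (ρβ tGen : Matrix (Fin 2) (Fin 2) ℂ) = !![β, 0; 0, β⁻¹])
    (hβs : (ρβ sGen : Matrix (Fin 2) (Fin 2) ℂ) = !![0, 1; 1, 0]) :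
    (∃ e : (Fin 2 → ℂ) ≃ₗ[ℂ] (Fin 2 → ℂ),
        ∀ (g : DihedralZ) (v : Fin 2 → ℂ),
          e (Matrix.mulVec (ρα g : Matrix (Fin 2) (Fin 2) ℂ) v) =
            Matrix.mulVec (ρβ g : Matrix (Fin 2) (Fin 2) ℂ) (e v)) ↔
      (α = β ∨ α = β⁻¹) := by
  have hα0 : α ≠ 0 := by
    intro h; rw [h] at hα; simp at hα
  have hβ0 : β ≠ 0 := by
    intro h; rw [h] at hβ; simp at hβ
  constructor
  · rintro ⟨e, he⟩
    set M : Matrix (Fin 2) (Fin 2) ℂ := LinearMap.toMatrix' (e : (Fin 2 → ℂ) →ₗ[ℂ] (Fin 2 → ℂ)) with hMdef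
    have hMA : M * !![α, 0; 0, α⁻¹] = !![β, 0; 0, β⁻¹] * M := by
      have h1 : (e : (Fin 2 → ℂ) →ₗ[ℂ] (Fin 2 → ℂ)) ∘ₗ Matrix.toLin' !![α, 0; 0, α⁻¹]
          = Matrix.toLin' !![β, 0; 0, β⁻¹] ∘ₗ (e : (Fin 2 → ℂ) →ₗ[ℂ] (Fin 2 → ℂ)) := by
        apply LinearMap.ext
        intro v
        simp only [LinearMap.comp_apply, Matrix.toLin'_apply, LinearEquiv.coe_coe]
        rw [← hαt, ← hβt]
        exact he tGen v
      have h2 := congrArg LinearMap.toMatrix' h1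
      rwa [LinearMap.toMatrix'_comp, LinearMap.toMatrix'_comp, LinearMap.toMatrix'_toLin',
        LinearMap.toMatrix'_toLin'] at h2
    have h00 : M 0 0 * α = β * M 0 0 := by
      have := congrFun (congrFun hMA 0) 0
      simpa [Matrix.mul_apply, Fin.sum_univ_two] using this
    have h01 : M 0 1 * α⁻¹ = β * M 0 1 := by
      have h := congrFun (congrFun hMA 0) 1
      simp [Matrix.mul_apply, Fin.sum_univ_two] at h
      linear_combination h
    have hev : ∀ v, e v = M.mulVec v := by
      intro v
      have h2 := LinearMap.congr_fun
        (Matrix.toLin'_toMatrix' ((e : (Fin 2 → ℂ) →ₗ[ℂ] (Fin 2 → ℂ)))).symm v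
      rw [Matrix.toLin'_apply] at h2
      exact h2
    have hrow : M 0 0 ≠ 0 ∨ M 0 1 ≠ 0 := by
      by_contra h
      push_neg at h
      obtain ⟨ha, hb⟩ := h
      have h1 : e (e.symm (Pi.single 0 1)) 0 = (1 : ℂ) := by
        rw [e.apply_symm_apply]; simp
      rw [hev] at h1
      simp [Matrix.mulVec, dotProduct, Fin.sum_univ_two, ha, hb] at h1
    rcases hrow with h | h
    · left
      have : M 0 0 * α = M 0 0 * β := by rw [h00]; ring
      exact mul_left_cancel₀ h this
    · right
      have : M 0 1 * α⁻¹ = M 0 1 * β := by rw [h01]; ring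
      have hinv : α⁻¹ = β := mul_left_cancel₀ h this
      rw [← hinv, inv_inv]
  · intro h
    rcases h with h | h
    · refine ⟨LinearEquiv.refl ℂ (Fin 2 → ℂ), ?_⟩
      refine intertwine_of_gens ρα ρβ _ ?_ ?_
      · intro v
        simp only [LinearEquiv.refl_apply, hαt, hβt, h]
      · intro v
        simp only [LinearEquiv.refl_apply, hαs, hβs]
    · -- α = β⁻¹
      have hSS : (!![0, 1; 1, 0] : Matrix (Fin 2) (Fin 2) ℂ) * !![0, 1; 1, 0] = 1 := by
        rw [Matrix.one_fin_two]
        norm_num [Matrix.mul_fin_two]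
      refine ⟨LinearEquiv.ofLinear (Matrix.toLin' !![0, 1; 1, 0]) (Matrix.toLin' !![0, 1; 1, 0])
        ?_ ?_, ?_⟩
      · rw [← Matrix.toLin'_mul, hSS, Matrix.toLin'_one]
      · rw [← Matrix.toLin'_mul, hSS, Matrix.toLin'_one]
      refine intertwine_of_gens ρα ρβ _ ?_ ?_
      · intro v
        simp only [LinearEquiv.ofLinear_apply, Matrix.toLin'_apply, Matrix.mulVec_mulVec,
          hαt, hβt]
        have hβα : β = α⁻¹ := by rw [h, inv_inv]
        rw [h, hβα, inv_inv]
        norm_num [Matrix.mul_fin_two]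
      · intro v
        simp only [LinearEquiv.ofLinear_apply, Matrix.toLin'_apply, Matrix.mulVec_mulVec,
          hαs, hβs]
end

section
/- For a unit complex number α, the representation V_α of G = ℤ ⋊ ℤ/2 is irreducible (the only subspaces of ℂ² invariant under the action of all elements of G are 0 and ℂ²) if and only if α ≠ 1 and α ≠ −1. -/
lemma mulVec_two (a b c d x y : ℂ) :
    (!![a, b; c, d]).mulVec ![x, y] = ![a * x + b * y, c * x + d * y] := by
  funext i
  fin_cases i <;>
    simp [Matrix.mulVec, dotProduct, Fin.sum_univ_two]

/-- Every element of `DihedralZ` decomposes as `tGen ^ n * r` with `r` either `1` or `sGen`. -/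
lemma dihedral_decomp (g : DihedralZ) :
    ∃ n : ℤ, g = tGen ^ n * 1 ∨ g = tGen ^ n * sGen := by
  refine ⟨Multiplicative.toAdd (SemidirectProduct.left g), ?_⟩
  have e1 : (Multiplicative.ofAdd (1:ℤ)) ^ (Multiplicative.toAdd (SemidirectProduct.left g)) =
      SemidirectProduct.left g := by
    rw [← ofAdd_zsmul, smul_eq_mul, mul_one, ofAdd_toAdd]
  have htn : tGen ^ (Multiplicative.toAdd (SemidirectProduct.left g)) =
      SemidirectProduct.inl (SemidirectProduct.left g) := by
    have h2 := map_zpow (SemidirectProduct.inl : Multiplicative ℤ →*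
        SemidirectProduct (Multiplicative ℤ) (Multiplicative (ZMod 2)) dihedralAction)
      (Multiplicative.ofAdd (1:ℤ)) (Multiplicative.toAdd (SemidirectProduct.left g))
    rw [e1] at h2
    exact h2.symm
  have hcases : SemidirectProduct.right g = 1 ∨
      SemidirectProduct.right g = Multiplicative.ofAdd (1 : ZMod 2) := by
    generalize SemidirectProduct.right g = r
    revert r; decide
  rcases hcases with h | h
  · refine Or.inl ?_
    rw [mul_one, htn]
    conv_lhs => rw [← SemidirectProduct.inl_left_mul_inr_right g]
    rw [h, map_one, mul_one]
  · refine Or.inr ?_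
    rw [htn]
    conv_lhs => rw [← SemidirectProduct.inl_left_mul_inr_right g]
    rw [h]
    rfl

set_option maxHeartbeats 1000000 in
/-- For a unit complex number `α`, the representation `V_α` of `G = ℤ ⋊ ℤ/2`
(sending `t` to `diag(α, α⁻¹)` and `s` to `[[0,1],[1,0]]`) is irreducible if and
only if `α ≠ 1` and `α ≠ -1`. -/
theorem Valpha_irreducible_iff (α : ℂ) (hα : ‖α‖ = 1)
    (ρ : DihedralZ →* Matrix.unitaryGroup (Fin 2) ℂ)
    (ht : (ρ tGen : Matrix (Fin 2) (Fin 2) ℂ) = !![α, 0; 0, α⁻¹])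
    (hs : (ρ sGen : Matrix (Fin 2) (Fin 2) ℂ) = !![0, 1; 1, 0]) :
    (∀ p : Submodule ℂ (Fin 2 → ℂ),
        (∀ g : DihedralZ, p.map (Matrix.mulVecLin (ρ g : Matrix (Fin 2) (Fin 2) ℂ)) ≤ p) →
          p = ⊥ ∨ p = ⊤) ↔
      (α ≠ 1 ∧ α ≠ -1) := by
  have hα0 : α ≠ 0 := by
    intro h
    rw [h] at hα
    simp at hα
  constructor
  · -- irreducible → α ≠ ±1; contrapositive
    intro h
    by_contra hcon
    have hself : α⁻¹ = α := by
      rcases not_and_or.mp hcon with h1 | h1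
      · push_neg at h1
        rw [h1]; norm_num
      · push_neg at h1
        rw [h1]; norm_num
    set p : Submodule ℂ (Fin 2 → ℂ) := Submodule.span ℂ {![1, 1]} with hp
    have hts : Commute (ρ sGen) (ρ tGen) := by
      apply Subtype.ext
      show ((ρ sGen * ρ tGen : Matrix.unitaryGroup (Fin 2) ℂ) : Matrix (Fin 2) (Fin 2) ℂ) =
        ((ρ tGen * ρ sGen : Matrix.unitaryGroup (Fin 2) ℂ) : Matrix (Fin 2) (Fin 2) ℂ)
      rw [Submonoid.coe_mul, Submonoid.coe_mul, ht, hs, Matrix.mul_fin_two,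
        Matrix.mul_fin_two, hself]
      ext i j
      fin_cases i <;> fin_cases j <;> simp <;> ring
    have hcomm : ∀ g : DihedralZ, Commute (ρ sGen) (ρ g) := by
      intro g
      obtain ⟨n, hg | hg⟩ := dihedral_decomp g
      · rw [hg, mul_one, map_zpow]
        exact hts.zpow_right n
      · rw [hg, map_mul, map_zpow]
        exact Commute.mul_right (hts.zpow_right n) (Commute.refl _)
    have hcommM : ∀ g : DihedralZ,
        (!![0, 1; 1, 0] : Matrix (Fin 2) (Fin 2) ℂ) * (ρ g : Matrix (Fin 2) (Fin 2) ℂ) =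
          (ρ g : Matrix (Fin 2) (Fin 2) ℂ) * !![0, 1; 1, 0] := by
      intro g
      have h2 := congrArg (Subtype.val) (hcomm g)
      rw [Submonoid.coe_mul, Submonoid.coe_mul, hs] at h2
      exact h2
    have hinv : ∀ g : DihedralZ,
        p.map (Matrix.mulVecLin (ρ g : Matrix (Fin 2) (Fin 2) ℂ)) ≤ p := by
      intro g
      rw [hp, Submodule.map_span, Set.image_singleton]
      rw [Submodule.span_le, Set.singleton_subset_iff]
      set M : Matrix (Fin 2) (Fin 2) ℂ := (ρ g : Matrix (Fin 2) (Fin 2) ℂ) with hM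
      set w : Fin 2 → ℂ := Matrix.mulVecLin M ![1, 1] with hw
      have hSw : (!![0, 1; 1, 0] : Matrix (Fin 2) (Fin 2) ℂ).mulVec w = w := by
        have h1 : (!![(0:ℂ), 1; 1, 0]).mulVec (M.mulVec ![1, 1]) =
            ((!![(0:ℂ), 1; 1, 0]) * M).mulVec ![1, 1] := Matrix.mulVec_mulVec _ _ _
        rw [hw, Matrix.mulVecLin_apply, h1, hcommM g, ← Matrix.mulVec_mulVec]
        congr 1
        rw [mulVec_two]
        norm_num
      have hw10 : w 1 = w 0 := by
        have h2 := congrFun hSw 0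
        simpa [Matrix.mulVec, dotProduct, Fin.sum_univ_two] using h2
      have hweq : w = w 0 • ![1, 1] := by
        funext i
        fin_cases i <;> simp [hw10]
      rw [hweq]
      exact Submodule.smul_mem _ _ (Submodule.mem_span_singleton_self _)
    rcases h p hinv with hb | htop
    · have h2 : (![1, 1] : Fin 2 → ℂ) ∈ p := Submodule.mem_span_singleton_self _
      rw [hb, Submodule.mem_bot] at h2
      have h3 := congrFun h2 0
      simp at h3
    · have h10 : (![1, 0] : Fin 2 → ℂ) ∈ p := by rw [htop]; trivial
      rw [hp, Submodule.mem_span_singleton] at h10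
      obtain ⟨c, hc⟩ := h10
      have h0 := congrFun hc 0
      have h1 := congrFun hc 1
      simp at h0 h1
      rw [h0] at h1
      exact one_ne_zero h1
  · -- α ≠ ±1 → irreducible
    rintro ⟨h1, h2⟩ p hinv
    by_cases hb : p = ⊥
    · exact Or.inl hb
    right
    obtain ⟨v, hv, hv0⟩ := (Submodule.ne_bot_iff p).mp hb
    have hdiff : α - α⁻¹ ≠ 0 := by
      intro h
      have hαα : α * α = 1 := by
        have h' : α = α⁻¹ := by linear_combination h
        nth_rewrite 2 [h']
        exact mul_inv_cancel₀ hα0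
      rcases mul_self_eq_one_iff.mp hαα with h' | h'
      · exact h1 h'
      · exact h2 h'
    have he0 : (![1, 0] : Fin 2 → ℂ) ∈ p := by
      by_cases hv0' : v 0 = 0
      · have hv1 : v 1 ≠ 0 := by
          intro h
          apply hv0
          funext i
          fin_cases i <;> simp [hv0', h]
        have he1 : (![0, 1] : Fin 2 → ℂ) ∈ p := by
          have h3 : (![0, 1] : Fin 2 → ℂ) = (v 1)⁻¹ • v := by
            funext i
            fin_cases i <;> simp [hv0', inv_mul_cancel₀ hv1]
          rw [h3]
          exact Submodule.smul_mem _ _ hv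
        have h4 := hinv sGen (Submodule.mem_map_of_mem he1)
        rw [Matrix.mulVecLin_apply, hs, mulVec_two] at h4
        simpa using h4
      · have hT : Matrix.mulVecLin (ρ tGen : Matrix (Fin 2) (Fin 2) ℂ) v ∈ p :=
          hinv tGen (Submodule.mem_map_of_mem hv)
        have hvdec : v = ![v 0, v 1] := by
          funext i; fin_cases i <;> rfl
        rw [Matrix.mulVecLin_apply, ht, hvdec, mulVec_two] at hT
        have hwmem : (![α * v 0 + 0 * v 1, 0 * v 0 + α⁻¹ * v 1] : Fin 2 → ℂ) -
            α⁻¹ • v ∈ p := Submodule.sub_mem _ hT (Submodule.smul_mem _ _ hv)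
        have hne : (α - α⁻¹) * v 0 ≠ 0 := mul_ne_zero hdiff hv0'
        have hsub : (![α * v 0 + 0 * v 1, 0 * v 0 + α⁻¹ * v 1] : Fin 2 → ℂ) - α⁻¹ • v =
            ((α - α⁻¹) * v 0) • ![1, 0] := by
          funext i
          fin_cases i <;> simp [Pi.sub_apply, smul_eq_mul] <;> ring
        have hkey : (![1, 0] : Fin 2 → ℂ) =
            ((α - α⁻¹) * v 0)⁻¹ • (((α - α⁻¹) * v 0) • (![1, 0] : Fin 2 → ℂ)) := by
          rw [smul_smul, inv_mul_cancel₀ hne, one_smul]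
        rw [hkey, ← hsub]
        exact Submodule.smul_mem _ _ hwmem
    have he1 : (![0, 1] : Fin 2 → ℂ) ∈ p := by
      have h4 := hinv sGen (Submodule.mem_map_of_mem he0)
      rw [Matrix.mulVecLin_apply, hs, mulVec_two] at h4
      simpa using h4
    rw [Submodule.eq_top_iff']
    intro u
    have hu : u = u 0 • ![1, 0] + u 1 • ![0, 1] := by
      funext i; fin_cases i <;> simp
    rw [hu]
    exact Submodule.add_mem _ (Submodule.smul_mem _ _ he0) (Submodule.smul_mem _ _ he1)
end

section
/- Every irreducible unitary representation of G = ℤ ⋊ ℤ/2 on a nonzero finite-dimensional complex inner product space has dimension 1 or 2, and every irreducible unitary representation of dimension 2 is isomorphic to V_α for some unit complex number α with α ≠ ±1. -/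
abbrev SDP := SemidirectProduct (Multiplicative ℤ) (Multiplicative (ZMod 2)) dihedralAction

namespace SDPlemmas
open SemidirectProduct Multiplicative

lemma sq' : (inr (ofAdd (1:ZMod 2)) * inr (ofAdd (1:ZMod 2)) : SDP) = 1 := by
  rw [← map_mul]
  have : (ofAdd (1:ZMod 2)) * (ofAdd (1:ZMod 2)) = 1 := by decide
  rw [this, map_one]

lemma rel' : (inr (ofAdd (1:ZMod 2)) * inl (ofAdd (1:ℤ)) * (inr (ofAdd (1:ZMod 2)))⁻¹ : SDP)
    = (inl (ofAdd (1:ℤ)))⁻¹ := by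
  rw [← map_inv, ← inl_aut]
  rfl

lemma inl_eq_pow (n : Multiplicative ℤ) :
    (inl n : SDP) = (inl (ofAdd (1:ℤ))) ^ (n.toAdd) := by
  rw [← map_zpow]
  congr 1
  rw [← ofAdd_zsmul]
  simp

lemma inr_eq_pow (g : Multiplicative (ZMod 2)) :
    (inr g : SDP) = (inr (ofAdd (1:ZMod 2))) ^ (g.toAdd.val) := by
  rw [← map_pow]
  congr 1
  rw [← ofAdd_nsmul]
  rw [nsmul_eq_mul, mul_one, ZMod.natCast_rightInverse g.toAdd]
  rfl

end SDPlemmas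

lemma sGen_sq : sGen * sGen = 1 := SDPlemmas.sq'

lemma sGen_conj_tGen : sGen * tGen * sGen⁻¹ = tGen⁻¹ := SDPlemmas.rel'

lemma subgroup_eq_top (H : Subgroup DihedralZ) (ht : tGen ∈ H) (hs : sGen ∈ H) :
    ∀ g : DihedralZ, g ∈ H := by
  intro g
  have key : (SemidirectProduct.inl (g : SDP).left * SemidirectProduct.inr (g : SDP).right : SDP) ∈ H := by
    apply mul_mem
    · rw [SDPlemmas.inl_eq_pow]
      exact zpow_mem ht _
    · rw [SDPlemmas.inr_eq_pow]
      exact pow_mem hs _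
  have e : (SemidirectProduct.inl (g : SDP).left * SemidirectProduct.inr (g : SDP).right : SDP) = g :=
    SemidirectProduct.inl_left_mul_inr_right _
  rw [e] at key; exact key
open Matrix Multiplicative

def zmod2Hom {H : Type*} [Monoid H] (S : H) (hS : S ^ 2 = 1) : Multiplicative (ZMod 2) →* H where
  toFun ε := S ^ (ε.toAdd.val)
  map_one' := by show S ^ (0 : ZMod 2).val = 1; simp
  map_mul' x y := by
    show S ^ (x.toAdd + y.toAdd).val = _
    rw [ZMod.val_add, ← pow_eq_pow_mod _ hS, pow_add]

section
variable {α : ℂ}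

lemma alpha_ne_zero (hα : ‖α‖ = 1) : α ≠ 0 := by
  intro h; rw [h] at hα; simp at hα

noncomputable def Dmat (α : ℂ) : Matrix (Fin 2) (Fin 2) ℂ := !![α, 0; 0, α⁻¹]
def Smat : Matrix (Fin 2) (Fin 2) ℂ := !![0, 1; 1, 0]

lemma star_Dmat (hα : ‖α‖ = 1) : star (Dmat α) = !![α⁻¹, 0; 0, α] := by
  have hstar : (starRingEnd ℂ) α = α⁻¹ := (Complex.inv_eq_conj hα).symm
  show (Dmat α)ᴴ = _
  ext i j
  fin_cases i <;> fin_cases j <;>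
    simp [Dmat, conjTranspose_apply, Complex.star_def, hstar, map_inv₀, inv_inv]

lemma Dmat_mul (hα : ‖α‖ = 1) : Dmat α * !![α⁻¹, 0; 0, α] = 1 := by
  rw [show Dmat α * !![α⁻¹, 0; 0, α] = !![α * α⁻¹, 0; 0, α⁻¹ * α] by
    simp [Dmat, mul_fin_two]]
  rw [mul_inv_cancel₀ (alpha_ne_zero hα), inv_mul_cancel₀ (alpha_ne_zero hα), one_fin_two]

lemma Dmat_mem (hα : ‖α‖ = 1) : Dmat α ∈ Matrix.unitaryGroup (Fin 2) ℂ := by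
  rw [mem_unitaryGroup_iff, star_Dmat hα]; exact Dmat_mul hα

lemma Smat_mul : Smat * Smat = 1 := by simp [Smat, mul_fin_two, one_fin_two]

lemma Smat_mem : Smat ∈ Matrix.unitaryGroup (Fin 2) ℂ := by
  rw [mem_unitaryGroup_iff]
  have : star Smat = Smat := by
    show Smatᴴ = Smat
    ext i j; fin_cases i <;> fin_cases j <;> simp [Smat]
  rw [this, Smat_mul]

noncomputable def Du (hα : ‖α‖ = 1) : Matrix.unitaryGroup (Fin 2) ℂ := ⟨Dmat α, Dmat_mem hα⟩
noncomputable def Su : Matrix.unitaryGroup (Fin 2) ℂ := ⟨Smat, Smat_mem⟩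

lemma Su_sq : (Su : Matrix.unitaryGroup (Fin 2) ℂ) ^ 2 = 1 := by
  rw [pow_two]
  apply Subtype.ext
  show Smat * Smat = 1
  exact Smat_mul

lemma Du_inv (hα : ‖α‖ = 1) :
    (Du hα)⁻¹ = ⟨!![α⁻¹, 0; 0, α], by rw [← star_Dmat hα]; exact Unitary.star_mem (Dmat_mem hα)⟩ := by
  apply inv_eq_of_mul_eq_one_right
  apply Subtype.ext
  show Dmat α * !![α⁻¹, 0; 0, α] = 1
  exact Dmat_mul hα

lemma conj_rel (hα : ‖α‖ = 1) : Su * Du hα * Su⁻¹ = (Du hα)⁻¹ := by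
  have hSu : Su⁻¹ = Su := by rw [inv_eq_iff_mul_eq_one, ← pow_two, Su_sq]
  rw [hSu, Du_inv hα]
  apply Subtype.ext
  show Smat * Dmat α * Smat = !![α⁻¹, 0; 0, α]
  simp [Smat, Dmat, mul_fin_two]
end

open Matrix Multiplicative in
noncomputable def rhoAlpha {α : ℂ} (hα : ‖α‖ = 1) :
    DihedralZ →* Matrix.unitaryGroup (Fin 2) ℂ :=
  SemidirectProduct.lift (zpowersHom _ (Du hα)) (zmod2Hom Su Su_sq) (by
    intro g
    ext1
    show zpowersHom _ (Du hα) ((negAut ^ (g.toAdd.val)) (ofAdd (1:ℤ))) = _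
    have hlt := ZMod.val_lt g.toAdd
    rcases (by omega : g.toAdd.val = 0 ∨ g.toAdd.val = 1) with h | h
    · rw [h]
      show zpowersHom _ (Du hα) (ofAdd (1:ℤ)) = (MulAut.conj ((zmod2Hom Su Su_sq) g)) (zpowersHom _ (Du hα) (ofAdd (1:ℤ)))
      show _ = (zmod2Hom Su Su_sq) g * _ * ((zmod2Hom Su Su_sq) g)⁻¹
      show _ = Su ^ g.toAdd.val * _ * (Su ^ g.toAdd.val)⁻¹
      rw [h, pow_zero, one_mul, inv_one, mul_one]
    · rw [h, pow_one]
      show zpowersHom _ (Du hα) (ofAdd (1:ℤ))⁻¹ = (MulAut.conj ((zmod2Hom Su Su_sq) g)) (zpowersHom _ (Du hα) (ofAdd (1:ℤ)))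
      show _ = (zmod2Hom Su Su_sq) g * _ * ((zmod2Hom Su Su_sq) g)⁻¹
      show _ = Su ^ g.toAdd.val * _ * (Su ^ g.toAdd.val)⁻¹
      rw [h, pow_one]
      show (Du hα) ^ ((ofAdd (1:ℤ))⁻¹).toAdd = Su * (Du hα) ^ (ofAdd (1:ℤ)).toAdd * Su⁻¹
      have : ∀ u : Matrix.unitaryGroup (Fin 2) ℂ, Su * u * Su⁻¹ = (MulAut.conj Su) u := fun u => rfl
      rw [this, map_zpow, ← this, conj_rel hα, toAdd_inv, _root_.zpow_neg]
      simp
    )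

lemma rhoAlpha_tGen {α : ℂ} (hα : ‖α‖ = 1) : rhoAlpha hα tGen = Du hα := by
  have : rhoAlpha hα tGen = SemidirectProduct.lift (zpowersHom _ (Du hα)) (zmod2Hom Su Su_sq) _
      (SemidirectProduct.inl (Multiplicative.ofAdd (1:ℤ))) := rfl
  rw [this, SemidirectProduct.lift_inl]
  show (Du hα) ^ ((Multiplicative.ofAdd (1:ℤ)).toAdd) = Du hα
  simp

lemma rhoAlpha_sGen {α : ℂ} (hα : ‖α‖ = 1) : rhoAlpha hα sGen = Su := by
  have : rhoAlpha hα sGen = SemidirectProduct.lift (zpowersHom _ (Du hα)) (zmod2Hom Su Su_sq) _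
      (SemidirectProduct.inr (Multiplicative.ofAdd (1:ZMod 2))) := rfl
  rw [this, SemidirectProduct.lift_inr]
  show Su ^ ((1:ZMod 2)).val = Su
  rw [ZMod.val_one, pow_one]

lemma sGen_inv : sGen⁻¹ = sGen := inv_eq_of_mul_eq_one_left sGen_sq

lemma tGen_mul_sGen : tGen * sGen = sGen * tGen⁻¹ := by
  have h := sGen_conj_tGen
  calc tGen * sGen = (sGen * sGen) * tGen * sGen⁻¹ := by rw [sGen_sq, one_mul, sGen_inv]
    _ = sGen * (sGen * tGen * sGen⁻¹) := by group
    _ = sGen * tGen⁻¹ := by rw [h]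

section Rep
variable {W : Type} [NormedAddCommGroup W] [InnerProductSpace ℂ W] [FiniteDimensional ℂ W]
  (ρ : DihedralZ →* (W ≃ₗᵢ[ℂ] W))

lemma rho_comp (g h : DihedralZ) (w : W) : ρ (g * h) w = ρ g (ρ h w) := by
  rw [_root_.map_mul]; rfl

lemma rho_one (w : W) : ρ 1 w = w := by rw [_root_.map_one]; rfl

lemma invariant_all (p : Submodule ℂ W)
    (ht : p.map ((ρ tGen).toLinearEquiv : W →ₗ[ℂ] W) ≤ p)
    (hs : p.map ((ρ sGen).toLinearEquiv : W →ₗ[ℂ] W) ≤ p) :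
    ∀ g, p.map ((ρ g).toLinearEquiv : W →ₗ[ℂ] W) ≤ p := by
  have comp : ∀ g h : DihedralZ, ((ρ (g*h)).toLinearEquiv : W →ₗ[ℂ] W)
      = ((ρ g).toLinearEquiv : W →ₗ[ℂ] W) ∘ₗ ((ρ h).toLinearEquiv : W →ₗ[ℂ] W) :=
    fun g h => LinearMap.ext fun w => rho_comp ρ g h w
  have eq_of_le : ∀ g : DihedralZ, p.map ((ρ g).toLinearEquiv : W →ₗ[ℂ] W) ≤ p →
      p.map ((ρ g).toLinearEquiv : W →ₗ[ℂ] W) = p := fun g h =>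
    Submodule.eq_of_le_of_finrank_le h
      (le_of_eq (LinearEquiv.finrank_map_eq (ρ g).toLinearEquiv p).symm)
  have hone : ((ρ (1 : DihedralZ)).toLinearEquiv : W →ₗ[ℂ] W) = LinearMap.id :=
    LinearMap.ext fun w => rho_one ρ w
  let H : Subgroup DihedralZ :=
    { carrier := {g | p.map ((ρ g).toLinearEquiv : W →ₗ[ℂ] W) = p}
      one_mem' := by show p.map _ = p; rw [hone, Submodule.map_id]
      mul_mem' := by
        intro g h hg hh
        show p.map _ = p
        rw [comp, Submodule.map_comp, hh, hg]
      inv_mem' := by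
        intro g hg
        show p.map _ = p
        conv_lhs => rw [← (hg : p.map _ = p)]
        rw [← Submodule.map_comp, ← comp, inv_mul_cancel, hone, Submodule.map_id] }
  intro g
  exact le_of_eq (subgroup_eq_top H (eq_of_le _ ht) (eq_of_le _ hs) g)

end Rep


/-- Every irreducible unitary representation of `G = ℤ ⋊ ℤ/2` on a nonzero
finite-dimensional complex inner product space has dimension `1` or `2`, and every
irreducible unitary representation of dimension `2` is isomorphic to `V_α` for some
unit complex number `α ≠ ±1`. -/
theorem dihedralZ_irreducible_classification (W : Type)
    [NormedAddCommGroup W] [InnerProductSpace ℂ W] [FiniteDimensional ℂ W]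
    (ρ : DihedralZ →* (W ≃ₗᵢ[ℂ] W))
    (hW : 0 < Module.finrank ℂ W)
    (hirr : ∀ p : Submodule ℂ W,
        (∀ g : DihedralZ, p.map ((ρ g).toLinearEquiv : W →ₗ[ℂ] W) ≤ p) →
          p = ⊥ ∨ p = ⊤) :
    (Module.finrank ℂ W = 1 ∨ Module.finrank ℂ W = 2) ∧
    (Module.finrank ℂ W = 2 →
      ∃ α : ℂ, ‖α‖ = 1 ∧ α ≠ 1 ∧ α ≠ -1 ∧
        ∃ ρα : DihedralZ →* Matrix.unitaryGroup (Fin 2) ℂ,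
          (ρα tGen : Matrix (Fin 2) (Fin 2) ℂ) = !![α, 0; 0, α⁻¹] ∧
          (ρα sGen : Matrix (Fin 2) (Fin 2) ℂ) = !![0, 1; 1, 0] ∧
          ∃ e : W ≃ₗ[ℂ] (Fin 2 → ℂ),
            ∀ (g : DihedralZ) (w : W),
              e (ρ g w) = Matrix.mulVec (ρα g : Matrix (Fin 2) (Fin 2) ℂ) (e w)) := by
  have ntW : Nontrivial W := Module.finrank_pos_iff.mp hW
  obtain ⟨α, hαeig⟩ := Module.End.exists_eigenvalue ((ρ tGen).toLinearEquiv : W →ₗ[ℂ] W)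
  obtain ⟨v, hv⟩ := hαeig.exists_hasEigenvector
  have hv0 : v ≠ 0 := hv.2
  have hTv : ρ tGen v = α • v := hv.apply_eq_smul
  -- |α| = 1
  have hnormα : ‖α‖ = 1 := by
    have h1 : ‖α‖ * ‖v‖ = 1 * ‖v‖ := by
      rw [← norm_smul, ← hTv, (ρ tGen).norm_map, one_mul]
    exact mul_right_cancel₀ (norm_ne_zero_iff.2 hv0) h1
  have hαabs : ‖α‖ = 1 := by exact hnormα
  have hα0 : α ≠ 0 := alpha_ne_zero hαabs
  have hTinv : ρ tGen⁻¹ v = α⁻¹ • v := by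
    have h0 : ρ tGen⁻¹ (ρ tGen v) = v := by rw [← rho_comp, inv_mul_cancel, rho_one]
    rw [hTv, _root_.map_smul] at h0
    have h1 : α⁻¹ • (α • ρ tGen⁻¹ v) = α⁻¹ • v := by rw [h0]
    rw [smul_smul, inv_mul_cancel₀ hα0, one_smul] at h1
    exact h1
  have hTSv : ρ tGen (ρ sGen v) = α⁻¹ • ρ sGen v := by
    rw [← rho_comp, tGen_mul_sGen, rho_comp, hTinv, _root_.map_smul]
  have hSSv : ρ sGen (ρ sGen v) = v := by rw [← rho_comp, sGen_sq, rho_one]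
  -- the span of v and S v is everything
  set p : Submodule ℂ W := Submodule.span ℂ {v, ρ sGen v} with hp
  have hvp : v ∈ p := Submodule.subset_span (Set.mem_insert _ _)
  have hSvp : ρ sGen v ∈ p := Submodule.subset_span (Set.mem_insert_of_mem _ rfl)
  have hpt : p.map ((ρ tGen).toLinearEquiv : W →ₗ[ℂ] W) ≤ p := by
    rw [hp, Submodule.map_span, Set.image_pair]
    apply Submodule.span_le.2
    intro x hx
    rcases hx with h | h
    · rw [h]; show ρ tGen v ∈ p; rw [hTv]; exact p.smul_mem _ hvp
    · rw [Set.mem_singleton_iff] at h; rw [h]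
      show ρ tGen (ρ sGen v) ∈ p; rw [hTSv]; exact p.smul_mem _ hSvp
  have hps : p.map ((ρ sGen).toLinearEquiv : W →ₗ[ℂ] W) ≤ p := by
    rw [hp, Submodule.map_span, Set.image_pair]
    apply Submodule.span_le.2
    intro x hx
    rcases hx with h | h
    · rw [h]; exact hSvp
    · rw [Set.mem_singleton_iff] at h; rw [h]
      show ρ sGen (ρ sGen v) ∈ p; rw [hSSv]; exact hvp
  have hptop : p = ⊤ := by
    rcases hirr p (invariant_all ρ p hpt hps) with h | h
    · exact absurd (h ▸ hvp) (by simp [hv0])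
    · exact h
  -- dimension bound
  have hdim2 : Module.finrank ℂ W ≤ 2 := by
    classical
    have h1 : Module.finrank ℂ W = Module.finrank ℂ p := by
      rw [hptop, finrank_top]
    rw [h1, hp]
    refine (finrank_span_le_card _).trans ?_
    rw [Set.toFinset_insert, Set.toFinset_singleton]
    exact (Finset.card_insert_le _ _).trans (by simp)
  constructor
  · omega
  intro hdim
  -- α ≠ ±1
  have hαα : α⁻¹ ≠ α := by
    intro heq
    have key : ∀ w : W, w ≠ 0 → ρ tGen w = α • w → (∃ c : ℂ, ρ sGen w = c • w) → False := by
      rintro w hw0 hTw ⟨c, hSw⟩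
      set q : Submodule ℂ W := Submodule.span ℂ {w} with hq
      have hwq : w ∈ q := Submodule.mem_span_singleton_self w
      have hqt : q.map ((ρ tGen).toLinearEquiv : W →ₗ[ℂ] W) ≤ q := by
        rw [hq, Submodule.map_span, Set.image_singleton]
        apply Submodule.span_le.2
        intro x hx
        rw [Set.mem_singleton_iff] at hx; rw [hx]
        show ρ tGen w ∈ q; rw [hTw]; exact q.smul_mem _ hwq
      have hqs : q.map ((ρ sGen).toLinearEquiv : W →ₗ[ℂ] W) ≤ q := by
        rw [hq, Submodule.map_span, Set.image_singleton]
        apply Submodule.span_le.2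
        intro x hx
        rw [Set.mem_singleton_iff] at hx; rw [hx]
        show ρ sGen w ∈ q; rw [hSw]; exact q.smul_mem _ hwq
      rcases hirr q (invariant_all ρ q hqt hqs) with h | h
      · exact hw0 (by simpa [h] using hwq)
      · have : Module.finrank ℂ W = 1 := by
          rw [← finrank_top ℂ W, ← h, hq, finrank_span_singleton hw0]
        omega
    by_cases hw : v + ρ sGen v = 0
    · refine key v hv0 hTv ⟨-1, ?_⟩
      have : ρ sGen v = -v := by linear_combination (norm := module) hw
      rw [this]; module
    · refine key (v + ρ sGen v) hw ?_ ⟨1, ?_⟩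
      · rw [_root_.map_add, hTv, hTSv, heq]; module
      · rw [_root_.map_add, hSSv, one_smul]; exact add_comm _ _
  have hα1 : α ≠ 1 := fun h => hαα (by rw [h, inv_one])
  have hαm1 : α ≠ -1 := fun h => hαα (by rw [h]; norm_num)
  refine ⟨α, hαabs, hα1, hαm1, rhoAlpha hαabs, ?_, ?_, ?_⟩
  · rw [rhoAlpha_tGen]; rfl
  · rw [rhoAlpha_sGen]; rfl
  -- construct the basis
  have hSv0 : ρ sGen v ≠ 0 := by
    intro h
    apply hv0
    rw [← hSSv, h, _root_.map_zero]
  have hli : LinearIndependent ℂ ![v, ρ sGen v] := by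
    apply Module.End.eigenvectors_linearIndependent' ((ρ tGen).toLinearEquiv : W →ₗ[ℂ] W)
      ![α, α⁻¹] ?_ ![v, ρ sGen v]
    · intro i
      fin_cases i
      · exact ⟨Module.End.mem_eigenspace_iff.2 hTv, hv0⟩
      · exact ⟨Module.End.mem_eigenspace_iff.2 hTSv, hSv0⟩
    · intro i j hij
      fin_cases i <;> fin_cases j
      · rfl
      · exfalso
        apply hαα
        have h' : α = α⁻¹ := by simpa using hij
        exact h'.symm
      · exfalso
        apply hαα
        simpa using hij
      · rfl
  have hcard : Fintype.card (Fin 2) = Module.finrank ℂ W := by simp [hdim]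
  let b : Module.Basis (Fin 2) ℂ W := basisOfLinearIndependentOfCardEqFinrank hli hcard
  have hb : ⇑b = ![v, ρ sGen v] := coe_basisOfLinearIndependentOfCardEqFinrank hli hcard
  have hb0 : b 0 = v := by rw [hb]; rfl
  have hb1 : b 1 = ρ sGen v := by rw [hb]; rfl
  refine ⟨b.equivFun, ?_⟩
  -- the intertwining identity
  have hmulvec : ∀ (M : Matrix (Fin 2) (Fin 2) ℂ) (g : DihedralZ),
      (rhoAlpha hαabs g : Matrix (Fin 2) (Fin 2) ℂ) = M →
      (∀ i : Fin 2, b.equivFun (ρ g (b i)) = M.mulVec (b.equivFun (b i))) →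
      ∀ w : W, b.equivFun (ρ g w) = Matrix.mulVec (rhoAlpha hαabs g : Matrix (Fin 2) (Fin 2) ℂ) (b.equivFun w) := by
    intro M g hM hbase w
    rw [hM]
    have : (b.equivFun.toLinearMap ∘ₗ ((ρ g).toLinearEquiv : W →ₗ[ℂ] W))
        = (M.mulVecLin ∘ₗ b.equivFun.toLinearMap) := by
      apply b.ext
      intro i
      simpa using hbase i
    simpa using LinearMap.congr_fun this w
  let K : Subgroup DihedralZ :=
    { carrier := {g | ∀ w : W, b.equivFun (ρ g w)
        = Matrix.mulVec (rhoAlpha hαabs g : Matrix (Fin 2) (Fin 2) ℂ) (b.equivFun w)}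
      one_mem' := by
        intro w
        rw [rho_one, _root_.map_one, OneMemClass.coe_one, Matrix.one_mulVec]
      mul_mem' := by
        intro g h hg hh w
        rw [rho_comp, hg, hh, Matrix.mulVec_mulVec, _root_.map_mul, MulMemClass.coe_mul]
      inv_mem' := by
        intro g hg w
        have h0 := hg (ρ g⁻¹ w)
        rw [← rho_comp, mul_inv_cancel, rho_one] at h0
        rw [h0, Matrix.mulVec_mulVec, ← MulMemClass.coe_mul, ← _root_.map_mul, inv_mul_cancel,
          _root_.map_one, OneMemClass.coe_one, Matrix.one_mulVec] }
  have hTb0 : ρ tGen (b 0) = α • b 0 := by rw [hb0, hTv]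
  have hTb1 : ρ tGen (b 1) = α⁻¹ • b 1 := by rw [hb1, hTSv]
  have hSb0 : ρ sGen (b 0) = b 1 := by rw [hb0, hb1]
  have hSb1 : ρ sGen (b 1) = b 0 := by rw [hb1, hb0, hSSv]
  have htK : tGen ∈ K := by
    apply hmulvec !![α, 0; 0, α⁻¹] tGen (by rw [rhoAlpha_tGen]; rfl)
    have case0 : b.equivFun (ρ tGen (b 0)) = Matrix.mulVec !![α, 0; 0, α⁻¹] (b.equivFun (b 0)) := by
      rw [hTb0, _root_.map_smul]
      funext j
      fin_cases j <;>
        simp [Matrix.mulVec, dotProduct, Fin.sum_univ_two, Module.Basis.equivFun_self]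
    have case1 : b.equivFun (ρ tGen (b 1)) = Matrix.mulVec !![α, 0; 0, α⁻¹] (b.equivFun (b 1)) := by
      rw [hTb1, _root_.map_smul]
      funext j
      fin_cases j <;>
        simp [Matrix.mulVec, dotProduct, Fin.sum_univ_two, Module.Basis.equivFun_self]
    intro i
    fin_cases i
    exacts [case0, case1]
  have hsK : sGen ∈ K := by
    apply hmulvec !![0, 1; 1, 0] sGen (by rw [rhoAlpha_sGen]; rfl)
    have case0 : b.equivFun (ρ sGen (b 0)) = Matrix.mulVec !![0, 1; 1, 0] (b.equivFun (b 0)) := by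
      rw [hSb0]
      funext j
      fin_cases j <;>
        simp [Matrix.mulVec, dotProduct, Fin.sum_univ_two, Module.Basis.equivFun_self]
    have case1 : b.equivFun (ρ sGen (b 1)) = Matrix.mulVec !![0, 1; 1, 0] (b.equivFun (b 1)) := by
      rw [hSb1]
      funext j
      fin_cases j <;>
        simp [Matrix.mulVec, dotProduct, Fin.sum_univ_two, Module.Basis.equivFun_self]
    intro i
    fin_cases i
    exacts [case0, case1]
  intro g w
  exact subgroup_eq_top K htK hsK g w
end

section
/- If y and y' are elements of π₁((S¹)^k, (1,…,1)) such that for some n ≥ 1 their images in π₁(X(n, k), e_n) under the map induced by ι_n : (S¹)^k → X(n, k) coincide, then y = y'. -/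
/-- The relation of simultaneous conjugation on `k`-tuples of elements of `U(n)`:
`(B'_1, …, B'_k) = (A B_1 A⁻¹, …, A B_k A⁻¹)` for some `A ∈ U(n)`. -/
def simConjRel (n k : ℕ)
    (B B' : Fin k → Matrix.unitaryGroup (Fin n) ℂ) : Prop :=
  ∃ A : Matrix.unitaryGroup (Fin n) ℂ, ∀ i, B' i = A * B i * A⁻¹

/-- The space `X(n, k) = U(n)^k / U(n)`, the quotient of the `k`-fold product of
`U(n)` by simultaneous conjugation, with the quotient topology. -/
def XSpace (n k : ℕ) : Type :=
  Quot (simConjRel n k)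

instance (n k : ℕ) : TopologicalSpace (XSpace n k) :=
  inferInstanceAs (TopologicalSpace (Quot (simConjRel n k)))

/-- The basepoint `e_n ∈ X(n, k)`: the class of the tuple of identity matrices. -/
def basePoint (n k : ℕ) : XSpace n k :=
  Quot.mk _ (fun _ => 1)

/-- The block-diagonal enlargement of an `n × n` matrix to an `m × m` matrix, with
blocks `M` and the identity:  the entry at `(i, j)` is `M i j` in the upper-left
corner, and otherwise is an identity-matrix entry. -/
def embDiag {n : ℕ} (m : ℕ) (M : Matrix (Fin n) (Fin n) ℂ) : Matrix (Fin m) (Fin m) ℂ :=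
  Matrix.of fun i j =>
    if h : (i : ℕ) < n ∧ (j : ℕ) < n then M ⟨i, h.1⟩ ⟨j, h.2⟩
    else if (i : ℕ) = (j : ℕ) then 1 else 0

/-- `σ : X(n, k) → X(m, k)` is the stabilization map: it sends the class of
`(B_1, …, B_k)` to the class of `(B_1 ⊕ 1, …, B_k ⊕ 1)`. -/
def IsStabilizationMap (n m k : ℕ) (σ : C(XSpace n k, XSpace m k)) : Prop :=
  ∀ (B : Fin k → Matrix.unitaryGroup (Fin n) ℂ)
    (B' : Fin k → Matrix.unitaryGroup (Fin m) ℂ),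
    (∀ i, (B' i : Matrix (Fin m) (Fin m) ℂ) = embDiag m (B i : Matrix (Fin n) (Fin n) ℂ)) →
      σ (Quot.mk _ B) = Quot.mk _ B'

/-- `ι : (S¹)^k → X(n, k)` is the map sending `(z_1, …, z_k)` to the class of the
tuple of diagonal matrices `diag(z_i, 1, …, 1)`. -/
def IsIotaMap (n k : ℕ) (ι : C((Fin k → Circle), XSpace n k)) : Prop :=
  ∀ (z : Fin k → Circle) (B : Fin k → Matrix.unitaryGroup (Fin n) ℂ),
    (∀ i, (B i : Matrix (Fin n) (Fin n) ℂ) =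
        Matrix.diagonal (fun (j : Fin n) => if (j : ℕ) = 0 then (z i : ℂ) else 1)) →
      ι z = Quot.mk _ B

lemma aux_det_mem_circle {n : ℕ} (A : Matrix.unitaryGroup (Fin n) ℂ) :
    (A : Matrix (Fin n) (Fin n) ℂ).det ∈ Submonoid.unitSphere ℂ := by
  have h := Matrix.det_of_mem_unitary A.2
  have h1 : star ((A : Matrix (Fin n) (Fin n) ℂ).det) * (A : Matrix (Fin n) (Fin n) ℂ).det = 1 :=
    Unitary.star_mul_self_of_mem h
  have hsq : Complex.normSq ((A : Matrix (Fin n) (Fin n) ℂ).det) = 1 := by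
    have := congrArg Complex.re h1
    simpa [Complex.normSq_apply, Complex.mul_re] using this
  have habs := Complex.normSq_eq_norm_sq ((A : Matrix (Fin n) (Fin n) ℂ).det)
  show _ ∈ Metric.sphere (0:ℂ) 1
  rw [mem_sphere_zero_iff_norm]
  nlinarith [norm_nonneg ((A : Matrix (Fin n) (Fin n) ℂ).det)]

noncomputable def auxDetCircle {n : ℕ} (A : Matrix.unitaryGroup (Fin n) ℂ) : Circle :=
  ⟨(A : Matrix (Fin n) (Fin n) ℂ).det, aux_det_mem_circle A⟩

lemma auxDetCircle_conj {n : ℕ} (A B : Matrix.unitaryGroup (Fin n) ℂ) :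
    auxDetCircle (A * B * A⁻¹) = auxDetCircle B := by
  apply Subtype.ext
  show ((A * B * A⁻¹ : Matrix.unitaryGroup (Fin n) ℂ) : Matrix (Fin n) (Fin n) ℂ).det
      = ((B : Matrix.unitaryGroup (Fin n) ℂ) : Matrix (Fin n) (Fin n) ℂ).det
  have hcoe : ((A * B * A⁻¹ : Matrix.unitaryGroup (Fin n) ℂ) : Matrix (Fin n) (Fin n) ℂ)
      = (A : Matrix (Fin n) (Fin n) ℂ) * B
        * ((A⁻¹ : Matrix.unitaryGroup (Fin n) ℂ) : Matrix (Fin n) (Fin n) ℂ) := rfl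
  have hA : ((A⁻¹ : Matrix.unitaryGroup (Fin n) ℂ) : Matrix (Fin n) (Fin n) ℂ)
      = (A : Matrix (Fin n) (Fin n) ℂ)⁻¹ := by
    have h0 : ((A⁻¹ : Matrix.unitaryGroup (Fin n) ℂ) : Matrix (Fin n) (Fin n) ℂ)
        = star (A : Matrix (Fin n) (Fin n) ℂ) := rfl
    rw [h0]
    exact (Matrix.inv_eq_left_inv A.2.1).symm
  rw [hcoe, hA, Matrix.det_mul, Matrix.det_mul, Matrix.det_nonsing_inv]
  have hdet : IsUnit (A : Matrix (Fin n) (Fin n) ℂ).det := Matrix.UnitaryGroup.det_isUnit A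
  rw [Ring.inverse_eq_inv, mul_comm ((A : Matrix (Fin n) (Fin n) ℂ).det)]
  exact mul_inv_cancel_right₀ hdet.ne_zero _

/-- The retraction `X(n,k) → (S¹)^k` given by coordinatewise determinant. -/
noncomputable def auxRetract (n k : ℕ) : C(XSpace n k, Fin k → Circle) where
  toFun := Quot.lift (fun B i => auxDetCircle (B i)) (by
    rintro B B' ⟨A, hA⟩
    funext i
    show auxDetCircle (B i) = auxDetCircle (B' i)
    rw [hA i, auxDetCircle_conj])
  continuous_toFun := by
    exact continuous_quot_lift _ (continuous_pi fun i =>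
      Continuous.subtype_mk
        ((continuous_subtype_val.comp (continuous_apply i)).matrix_det) _)

/-- The map induced by `ι_n : (S¹)^k → X(n, k)` on fundamental groups is injective:
if two loops at `(1, …, 1)` in `(S¹)^k` have images under `ι_n` that are homotopic
rel endpoints, then the loops are already homotopic rel endpoints. -/
theorem iota_pi1_injective (k : ℕ) (hk : 1 ≤ k) (n : ℕ) (hn : 1 ≤ n)
    (ι : C((Fin k → Circle), XSpace n k)) (hι : IsIotaMap n k ι)
    (δ δ' : C(unitInterval, (Fin k → Circle)))
    (hδ0 : δ 0 = 1) (hδ1 : δ 1 = 1) (hδ'0 : δ' 0 = 1) (hδ'1 : δ' 1 = 1)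
    (h : ContinuousMap.HomotopicRel (ι.comp δ) (ι.comp δ') {0, 1}) :
    ContinuousMap.HomotopicRel δ δ' {0, 1} := by
  set r := auxRetract n k
  have hretr : ∀ z : Fin k → Circle, r (ι z) = z := by
    intro z
    -- the tuple of diagonal matrices
    set d : Fin k → Fin n → ℂ := fun i j => if (j : ℕ) = 0 then (z i : ℂ) else 1 with hd
    have hmem : ∀ i, Matrix.diagonal (d i) ∈ Matrix.unitaryGroup (Fin n) ℂ := by
      intro i
      rw [Matrix.mem_unitaryGroup_iff']
      have hentry : ∀ j, star (d i j) * d i j = 1 := by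
        intro j
        simp only [hd]
        by_cases hj : (j : ℕ) = 0
        · simp only [hj, if_true]
          have hz : ‖(z i : ℂ)‖ = 1 := mem_sphere_zero_iff_norm.1 (z i).2
          rw [Complex.star_def, mul_comm, Complex.mul_conj']
          rw [hz]
          norm_num
        · simp [hj]
      calc star (Matrix.diagonal (d i)) * Matrix.diagonal (d i)
          = Matrix.diagonal (fun j => star (d i j) * d i j) := by
            rw [Matrix.star_eq_conjTranspose, Matrix.diagonal_conjTranspose,
              Matrix.diagonal_mul_diagonal]
            rfl
        _ = 1 := by
            rw [show (fun j => star (d i j) * d i j) = fun _ => (1:ℂ) from funext hentry,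
              Matrix.diagonal_one]
    set B : Fin k → Matrix.unitaryGroup (Fin n) ℂ := fun i => ⟨Matrix.diagonal (d i), hmem i⟩
    have hB : ι z = Quot.mk _ B := hι z B (fun i => rfl)
    rw [hB]
    funext i
    show auxDetCircle (B i) = z i
    apply Subtype.ext
    show (Matrix.diagonal (d i)).det = (z i : ℂ)
    rw [Matrix.det_diagonal]
    have h0 : (0 : ℕ) < n := hn
    rw [Finset.prod_eq_single (⟨0, h0⟩ : Fin n)]
    · simp [hd]
    · intro j _ hj
      have : (j : ℕ) ≠ 0 := by
        intro hc; apply hj; exact Fin.ext hc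
      simp [hd, this]
    · intro hmem'; exact absurd (Finset.mem_univ _) hmem'
  obtain ⟨H⟩ := h
  refine ⟨((H.compContinuousMap r).cast ?_ ?_)⟩
  · ext t x
    exact congrArg Subtype.val (congrFun (hretr (δ t)) x)
  · ext t x
    exact congrArg Subtype.val (congrFun (hretr (δ' t)) x)
end
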